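/- Let Γ be the subgroup of SL(2,ℝ) generated by the five matrices γ₁ = [[1,1],[0,1]], γ₂ = [[0, −1/√11],[√11, 0]], γ₃ = [[√11, 5/√11],[2√11, √11]], γ₄ = [[10,3],[33,10]], γ₅ = [[23,8],[66,23]]. Then Γ is commensurable with the image of SL(2,ℤ) in SL(2,ℝ): the intersection of Γ with the image of SL(2,ℤ) has finite index in both Γ and in the image of SL(2,ℤ). (This expresses that the associated reflection group Γ_ref is arithmetic.) -/

import Mathlib

open Matrix
open scoped MatrixGroups

/-- `γ₁ = [[1,1],[0,1]]`. -/
def gamma1 : SL(2, ℝ) := ⟨!![1, 1; 0, 1], by norm_num [Matrix.det_fin_two_of]⟩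

/-- `γ₂ = [[0, −1/√11],[√11, 0]]`. -/
noncomputable def gamma2 : SL(2, ℝ) :=
  ⟨!![0, -1 / Real.sqrt 11; Real.sqrt 11, 0], by
    have h : Real.sqrt 11 ≠ 0 := by positivity
    rw [Matrix.det_fin_two_of]
    field_simp
    norm_num⟩

/-- `γ₃ = [[√11, 5/√11],[2√11, √11]]`. -/
noncomputable def gamma3 : SL(2, ℝ) :=
  ⟨!![Real.sqrt 11, 5 / Real.sqrt 11; 2 * Real.sqrt 11, Real.sqrt 11], by
    have h11 : Real.sqrt 11 * Real.sqrt 11 = 11 :=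
      Real.mul_self_sqrt (by norm_num)
    have h : Real.sqrt 11 ≠ 0 := by positivity
    rw [Matrix.det_fin_two_of]
    field_simp
    nlinarith [h11]⟩

/-- `γ₄ = [[10,3],[33,10]]`. -/
def gamma4 : SL(2, ℝ) := ⟨!![10, 3; 33, 10], by norm_num [Matrix.det_fin_two_of]⟩

/-- `γ₅ = [[23,8],[66,23]]`. -/
def gamma5 : SL(2, ℝ) := ⟨!![23, 8; 66, 23], by norm_num [Matrix.det_fin_two_of]⟩

/-- The entrywise embedding `SL(2,ℤ) →* SL(2,ℝ)`. -/
def mapSL : SL(2, ℤ) →* SL(2, ℝ) :=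
  Matrix.SpecialLinearGroup.map (Int.castRingHom ℝ)


namespace ArithRefl

def Tk (n : ℤ) : SL(2, ℤ) := ⟨!![1, n; 0, 1], by simp [Matrix.det_fin_two_of]⟩
def Uk (n : ℤ) : SL(2, ℤ) := ⟨!![1, 0; 11*n, 1], by simp [Matrix.det_fin_two_of]⟩
def Vz : SL(2, ℤ) := ⟨!![2, -1; 11, -5], by norm_num [Matrix.det_fin_two_of]⟩
def Az : SL(2, ℤ) := ⟨!![-2, -1; 11, 5], by norm_num [Matrix.det_fin_two_of]⟩
def G4z : SL(2, ℤ) := ⟨!![10, 3; 33, 10], by norm_num [Matrix.det_fin_two_of]⟩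
def G5z : SL(2, ℤ) := ⟨!![23, 8; 66, 23], by norm_num [Matrix.det_fin_two_of]⟩
def Wz : SL(2, ℤ) := ⟨!![23, -6; -88, 23], by norm_num [Matrix.det_fin_two_of]⟩
def Nz : SL(2, ℤ) := ⟨!![-1, 0; 0, -1], by norm_num [Matrix.det_fin_two_of]⟩
def R0 : SL(2, ℤ) := ⟨!![3, 1; 11, 4], by norm_num [Matrix.det_fin_two_of]⟩

def S : Set SL(2, ℤ) := {Tk 1, Uk 1, Vz, Az, G4z, G5z, Wz, Nz}

def Hz : Subgroup SL(2, ℤ) := Subgroup.closure S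

lemma Vz_mem : Vz ∈ Hz := Subgroup.subset_closure (by simp [S])
lemma Az_mem : Az ∈ Hz := Subgroup.subset_closure (by simp [S])
lemma G4z_mem : G4z ∈ Hz := Subgroup.subset_closure (by simp [S])
lemma G5z_mem : G5z ∈ Hz := Subgroup.subset_closure (by simp [S])
lemma Wz_mem : Wz ∈ Hz := Subgroup.subset_closure (by simp [S])
lemma Nz_mem : Nz ∈ Hz := Subgroup.subset_closure (by simp [S])

lemma coe_mul_explicit (X M : SL(2, ℤ)) (p q r s a b c d : ℤ)
    (hX : (X : Matrix (Fin 2) (Fin 2) ℤ) = !![p, q; r, s])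
    (hM : (M : Matrix (Fin 2) (Fin 2) ℤ) = !![a, b; c, d]) :
    ((X * M : SL(2, ℤ)) : Matrix (Fin 2) (Fin 2) ℤ)
      = !![p*a+q*c, p*b+q*d; r*a+s*c, r*b+s*d] := by
  rw [Matrix.SpecialLinearGroup.coe_mul, hX, hM, Matrix.mul_fin_two]

lemma Tk_mul (m n : ℤ) : Tk m * Tk n = Tk (m + n) := by
  apply Subtype.ext
  rw [coe_mul_explicit (Tk m) (Tk n) 1 m 0 1 1 n 0 1 rfl rfl]
  show _ = !![1, m + n; 0, 1]
  norm_num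
  ring_nf

lemma Uk_mul (m n : ℤ) : Uk m * Uk n = Uk (m + n) := by
  apply Subtype.ext
  rw [coe_mul_explicit (Uk m) (Uk n) 1 0 (11*m) 1 1 0 (11*n) 1 rfl rfl]
  show _ = !![1, 0; 11*(m+n), 1]
  norm_num
  ring_nf

lemma Tk_zpow (n : ℤ) : Tk n = (Tk 1) ^ n := by
  induction n using Int.induction_on with
  | zero =>
    apply Subtype.ext
    show (!![1,0;0,1] : Matrix (Fin 2) (Fin 2) ℤ) = _
    rw [zpow_zero]
    simp [Matrix.SpecialLinearGroup.coe_one, Matrix.one_fin_two]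
  | succ k ih => rw [_root_.zpow_add, ← ih, zpow_one, Tk_mul]
  | pred k ih =>
    rw [sub_eq_add_neg, _root_.zpow_add, ← ih, _root_.zpow_neg_one,
      eq_mul_inv_iff_mul_eq, Tk_mul]
    norm_num

lemma Uk_zpow (n : ℤ) : Uk n = (Uk 1) ^ n := by
  induction n using Int.induction_on with
  | zero =>
    apply Subtype.ext
    show (!![1,0;11*0,1] : Matrix (Fin 2) (Fin 2) ℤ) = _
    rw [zpow_zero]
    simp [Matrix.SpecialLinearGroup.coe_one, Matrix.one_fin_two]
  | succ k ih => rw [_root_.zpow_add, ← ih, zpow_one, Uk_mul]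
  | pred k ih =>
    rw [sub_eq_add_neg, _root_.zpow_add, ← ih, _root_.zpow_neg_one,
      eq_mul_inv_iff_mul_eq, Uk_mul]
    norm_num

lemma Tk_mem (n : ℤ) : Tk n ∈ Hz := by
  rw [Tk_zpow]; exact zpow_mem (Subgroup.subset_closure (by simp [S])) n

lemma Uk_mem (n : ℤ) : Uk n ∈ Hz := by
  rw [Uk_zpow]; exact zpow_mem (Subgroup.subset_closure (by simp [S])) n

lemma transfer {X M : SL(2, ℤ)} (hX : X ∈ Hz)
    (h : X * M ∈ Hz ∨ X * M * R0⁻¹ ∈ Hz) : M ∈ Hz ∨ M * R0⁻¹ ∈ Hz := by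
  rcases h with h | h
  · left
    have := mul_mem (inv_mem hX) h
    rwa [inv_mul_cancel_left] at this
  · right
    have := mul_mem (inv_mem hX) h
    rwa [show X⁻¹ * (X * M * R0⁻¹) = M * R0⁻¹ by group] at this

/-- Balanced division. -/
lemma bal (x y : ℤ) (hy : y ≠ 0) : ∃ k r : ℤ, x + y * k = r ∧ 2 * r.natAbs ≤ y.natAbs := by
  rcases hy.lt_or_gt with hneg | hpos
  · have h1 : 0 ≤ x % (-y) := Int.emod_nonneg x (by omega)
    have h2 : x % (-y) < -y := Int.emod_lt_of_pos x (by omega)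
    have heq : (-y) * (x / (-y)) + x % (-y) = x := Int.mul_ediv_add_emod x (-y)
    by_cases h : 2 * (x % (-y)) ≤ -y
    · exact ⟨x / (-y), x % (-y), by linarith, by omega⟩
    · exact ⟨x / (-y) + 1, x % (-y) + y, by linarith, by omega⟩
  · have h1 : 0 ≤ x % y := Int.emod_nonneg x (by omega)
    have h2 : x % y < y := Int.emod_lt_of_pos x hpos
    have heq : y * (x / y) + x % y = x := Int.mul_ediv_add_emod x y
    by_cases h : 2 * (x % y) ≤ y
    · exact ⟨-(x / y), x % y, by linarith, by omega⟩
    · exact ⟨-(x / y) - 1, x % y - y, by linarith, by omega⟩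

lemma coe_inv_explicit (X : SL(2, ℤ)) (p q r s : ℤ)
    (hX : (X : Matrix (Fin 2) (Fin 2) ℤ) = !![p, q; r, s]) :
    ((X⁻¹ : SL(2, ℤ)) : Matrix (Fin 2) (Fin 2) ℤ) = !![s, -q; -r, p] := by
  rw [Matrix.SpecialLinearGroup.coe_inv, hX, Matrix.adjugate_fin_two_of]

lemma coe_R0_inv : ((R0⁻¹ : SL(2, ℤ)) : Matrix (Fin 2) (Fin 2) ℤ) = !![4, -1; -11, 3] :=
  coe_inv_explicit R0 3 1 11 4 rfl
lemma coe_Vz_inv : ((Vz⁻¹ : SL(2, ℤ)) : Matrix (Fin 2) (Fin 2) ℤ) = !![-5, 1; -11, 2] :=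
  coe_inv_explicit Vz 2 (-1) 11 (-5) rfl
lemma coe_Az_inv : ((Az⁻¹ : SL(2, ℤ)) : Matrix (Fin 2) (Fin 2) ℤ) = !![5, 1; -11, -2] :=
  coe_inv_explicit Az (-2) (-1) 11 5 rfl
lemma coe_G4z_inv : ((G4z⁻¹ : SL(2, ℤ)) : Matrix (Fin 2) (Fin 2) ℤ) = !![10, -3; -33, 10] :=
  coe_inv_explicit G4z 10 3 33 10 rfl
lemma coe_G5z_inv : ((G5z⁻¹ : SL(2, ℤ)) : Matrix (Fin 2) (Fin 2) ℤ) = !![23, -8; -66, 23] :=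
  coe_inv_explicit G5z 23 8 66 23 rfl
lemma coe_Wz_inv : ((Wz⁻¹ : SL(2, ℤ)) : Matrix (Fin 2) (Fin 2) ℤ) = !![23, 6; 88, 23] :=
  coe_inv_explicit Wz 23 (-6) (-88) 23 rfl

lemma X1_eq : R0 * Tk 1 * R0⁻¹ = Nz * Wz⁻¹ * G4z⁻¹ := by
  apply Subtype.ext
  have h1 : ((R0 * Tk 1 : SL(2,ℤ)) : Matrix (Fin 2) (Fin 2) ℤ) = !![3, 4; 11, 15] := by
    rw [coe_mul_explicit R0 (Tk 1) 3 1 11 4 1 1 0 1 rfl rfl]; norm_num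
  have h2 : ((Nz * Wz⁻¹ : SL(2,ℤ)) : Matrix (Fin 2) (Fin 2) ℤ) = !![-23, -6; -88, -23] := by
    rw [coe_mul_explicit Nz (Wz⁻¹) (-1) 0 0 (-1) 23 6 88 23 rfl coe_Wz_inv]; norm_num
  rw [coe_mul_explicit (R0 * Tk 1) R0⁻¹ 3 4 11 15 4 (-1) (-11) 3 h1 coe_R0_inv,
    coe_mul_explicit (Nz * Wz⁻¹) (G4z⁻¹) (-23) (-6) (-88) (-23) 10 (-3) (-33) 10 h2 coe_G4z_inv]
  norm_num

lemma conjT_mem (m : ℤ) : R0 * Tk m * R0⁻¹ ∈ Hz := by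
  rw [Tk_zpow, ← conj_zpow]
  exact zpow_mem (by
    rw [X1_eq]
    exact mul_mem (mul_mem Nz_mem (inv_mem Wz_mem)) (inv_mem G4z_mem)) m

lemma stuck_gen (M B : SL(2, ℤ)) (m : ℤ) (hM : M = B * Tk m) (hB : B * R0⁻¹ ∈ Hz) :
    M * R0⁻¹ ∈ Hz := by
  rw [hM, show B * Tk m * R0⁻¹ = (B * R0⁻¹) * (R0 * Tk m * R0⁻¹) by group]
  exact mul_mem hB (conjT_mem m)

def B4 : SL(2, ℤ) := ⟨!![4, 1; 11, 3], by norm_num [Matrix.det_fin_two_of]⟩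
def B3n : SL(2, ℤ) := ⟨!![-3, 1; 11, -4], by norm_num [Matrix.det_fin_two_of]⟩
def B4n : SL(2, ℤ) := ⟨!![-4, 1; 11, -3], by norm_num [Matrix.det_fin_two_of]⟩

lemma eqB4 : B4 * R0⁻¹ ∈ Hz := by
  have h : B4 * R0⁻¹ = Nz * Vz⁻¹ := by
    apply Subtype.ext
    rw [coe_mul_explicit B4 R0⁻¹ 4 1 11 3 4 (-1) (-11) 3 rfl coe_R0_inv,
      coe_mul_explicit Nz (Vz⁻¹) (-1) 0 0 (-1) (-5) 1 (-11) 2 rfl coe_Vz_inv]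
    norm_num
  rw [h]; exact mul_mem Nz_mem (inv_mem Vz_mem)

lemma eqB3n : B3n * R0⁻¹ ∈ Hz := by
  have h : B3n * R0⁻¹ = Nz * Wz := by
    apply Subtype.ext
    rw [coe_mul_explicit B3n R0⁻¹ (-3) 1 11 (-4) 4 (-1) (-11) 3 rfl coe_R0_inv,
      coe_mul_explicit Nz Wz (-1) 0 0 (-1) 23 (-6) (-88) 23 rfl rfl]
    norm_num
  rw [h]; exact mul_mem Nz_mem Wz_mem

lemma eqB4n : B4n * R0⁻¹ ∈ Hz := by
  have h2 : ((Nz * Az⁻¹ : SL(2,ℤ)) : Matrix (Fin 2) (Fin 2) ℤ) = !![-5, -1; 11, 2] := by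
    rw [coe_mul_explicit Nz (Az⁻¹) (-1) 0 0 (-1) 5 1 (-11) (-2) rfl coe_Az_inv]; norm_num
  have h : B4n * R0⁻¹ = Nz * Az⁻¹ * Wz := by
    apply Subtype.ext
    rw [coe_mul_explicit B4n R0⁻¹ (-4) 1 11 (-3) 4 (-1) (-11) 3 rfl coe_R0_inv,
      coe_mul_explicit (Nz * Az⁻¹) Wz (-5) (-1) 11 2 23 (-6) (-88) 23 h2 rfl]
    norm_num
  rw [h]; exact mul_mem (mul_mem Nz_mem (inv_mem Az_mem)) Wz_mem

lemma det_explicit (M : SL(2, ℤ)) (a b c d : ℤ)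
    (hM : (M : Matrix (Fin 2) (Fin 2) ℤ) = !![a, b; c, d]) : a * d - b * c = 1 := by
  have h := M.2
  rw [hM, Matrix.det_fin_two_of] at h
  exact h

lemma stuck3 (M : SL(2, ℤ)) (b d : ℤ) (hM : (M : Matrix (Fin 2) (Fin 2) ℤ) = !![3, b; 11, d]) :
    M * R0⁻¹ ∈ Hz := by
  have hd := det_explicit M 3 b 11 d hM
  obtain ⟨m, hdm⟩ : ∃ m, d = 11 * m + 4 := ⟨(d - 4) / 11, by omega⟩
  have hbm : b = 3 * m + 1 := by omega
  refine stuck_gen M R0 m ?_ (by rw [mul_inv_cancel]; exact one_mem _)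
  apply Subtype.ext
  rw [coe_mul_explicit R0 (Tk m) 3 1 11 4 1 m 0 1 rfl rfl, hM, hdm, hbm]
  norm_num [mul_comm]

lemma stuck4 (M : SL(2, ℤ)) (b d : ℤ) (hM : (M : Matrix (Fin 2) (Fin 2) ℤ) = !![4, b; 11, d]) :
    M * R0⁻¹ ∈ Hz := by
  have hd := det_explicit M 4 b 11 d hM
  obtain ⟨m, hdm⟩ : ∃ m, d = 11 * m + 3 := ⟨(d - 3) / 11, by omega⟩
  have hbm : b = 4 * m + 1 := by omega
  refine stuck_gen M B4 m ?_ eqB4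
  apply Subtype.ext
  rw [coe_mul_explicit B4 (Tk m) 4 1 11 3 1 m 0 1 rfl rfl, hM, hdm, hbm]
  norm_num [mul_comm]

lemma stuck3n (M : SL(2, ℤ)) (b d : ℤ) (hM : (M : Matrix (Fin 2) (Fin 2) ℤ) = !![-3, b; 11, d]) :
    M * R0⁻¹ ∈ Hz := by
  have hd := det_explicit M (-3) b 11 d hM
  obtain ⟨m, hdm⟩ : ∃ m, d = 11 * m - 4 := ⟨(d + 4) / 11, by omega⟩
  have hbm : b = -3 * m + 1 := by omega
  refine stuck_gen M B3n m ?_ eqB3n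
  apply Subtype.ext
  rw [coe_mul_explicit B3n (Tk m) (-3) 1 11 (-4) 1 m 0 1 rfl rfl, hM, hdm, hbm]
  norm_num [mul_comm, sub_eq_add_neg]

lemma stuck4n (M : SL(2, ℤ)) (b d : ℤ) (hM : (M : Matrix (Fin 2) (Fin 2) ℤ) = !![-4, b; 11, d]) :
    M * R0⁻¹ ∈ Hz := by
  have hd := det_explicit M (-4) b 11 d hM
  obtain ⟨m, hdm⟩ : ∃ m, d = 11 * m - 3 := ⟨(d + 3) / 11, by omega⟩
  have hbm : b = -4 * m + 1 := by omega
  refine stuck_gen M B4n m ?_ eqB4n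
  apply Subtype.ext
  rw [coe_mul_explicit B4n (Tk m) (-4) 1 11 (-3) 1 m 0 1 rfl rfl, hM, hdm, hbm]
  norm_num [mul_comm, sub_eq_add_neg]

lemma base (M : SL(2, ℤ)) (h : (M : Matrix (Fin 2) (Fin 2) ℤ) 1 0 = 0) : M ∈ Hz := by
  have hM0 : (M : Matrix (Fin 2) (Fin 2) ℤ)
      = !![(M : Matrix (Fin 2) (Fin 2) ℤ) 0 0, (M : Matrix (Fin 2) (Fin 2) ℤ) 0 1;
          (M : Matrix (Fin 2) (Fin 2) ℤ) 1 0, (M : Matrix (Fin 2) (Fin 2) ℤ) 1 1] :=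
    Matrix.eta_fin_two _
  rw [h] at hM0
  have hd := det_explicit M _ _ 0 _ hM0
  have had : (M : Matrix (Fin 2) (Fin 2) ℤ) 0 0 * (M : Matrix (Fin 2) (Fin 2) ℤ) 1 1 = 1 := by
    linarith
  rcases Int.mul_eq_one_iff_eq_one_or_neg_one.mp had with ⟨h1, h2⟩ | ⟨h1, h2⟩
  · have hMeq : M = Tk ((M : Matrix (Fin 2) (Fin 2) ℤ) 0 1) := by
      apply Subtype.ext
      rw [hM0, h1, h2]
      rfl
    rw [hMeq]; exact Tk_mem _
  · have hMeq : M = Nz * Tk (-(M : Matrix (Fin 2) (Fin 2) ℤ) 0 1) := by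
      apply Subtype.ext
      rw [coe_mul_explicit Nz (Tk (-(M : Matrix (Fin 2) (Fin 2) ℤ) 0 1)) (-1) 0 0 (-1) 1
        (-(M : Matrix (Fin 2) (Fin 2) ℤ) 0 1) 0 1 rfl rfl, hM0, h1, h2]
      norm_num
    rw [hMeq]; exact mul_mem Nz_mem (Tk_mem _)

lemma step (M : SL(2, ℤ)) (c₁ : ℤ) (hpos : 0 < c₁)
    (hc : (M : Matrix (Fin 2) (Fin 2) ℤ) 1 0 = 11 * c₁)
    (IH : ∀ M' : SL(2, ℤ), ((M' : Matrix (Fin 2) (Fin 2) ℤ) 1 0).natAbs < (11*c₁).natAbs →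
      (11 ∣ (M' : Matrix (Fin 2) (Fin 2) ℤ) 1 0) → M' ∈ Hz ∨ M' * R0⁻¹ ∈ Hz) :
    M ∈ Hz ∨ M * R0⁻¹ ∈ Hz := by
  have hM := Matrix.eta_fin_two (M : Matrix (Fin 2) (Fin 2) ℤ)
  rw [hc] at hM
  obtain ⟨a, b, d, hM⟩ : ∃ a b d, (M : Matrix (Fin 2) (Fin 2) ℤ) = !![a, b; 11*c₁, d] :=
    ⟨_, _, _, hM⟩
  obtain ⟨k, a2, hk, hb2⟩ := bal a (11*c₁) (by omega)
  have hM1 : ((Tk k * M : SL(2, ℤ)) : Matrix (Fin 2) (Fin 2) ℤ)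
      = !![a2, b + k*d; 11*c₁, d] := by
    rw [coe_mul_explicit (Tk k) M 1 k 0 1 a b (11*c₁) d rfl hM]
    ext i j
    fin_cases i <;> fin_cases j <;> simp <;> linarith
  have hdet1 : a2 * d - (b + k*d) * (11*c₁) = 1 := det_explicit _ _ _ _ _ hM1
  have doit : ∀ X : SL(2, ℤ), X ∈ Hz → ∀ e : ℤ,
      ((X * (Tk k * M) : SL(2, ℤ)) : Matrix (Fin 2) (Fin 2) ℤ) 1 0 = 11 * e →
      e.natAbs < c₁.natAbs → (M ∈ Hz ∨ M * R0⁻¹ ∈ Hz) := by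
    intro X hX e he hlt
    have hres := IH (X * (Tk k * M)) (by rw [he]; omega) ⟨e, he⟩
    rw [← mul_assoc] at hres
    exact transfer (mul_mem hX (Tk_mem k)) hres
  have hent : ∀ (X : SL(2, ℤ)) (p q r s : ℤ), (X : Matrix (Fin 2) (Fin 2) ℤ) = !![p, q; r, s] →
      ((X * (Tk k * M) : SL(2, ℤ)) : Matrix (Fin 2) (Fin 2) ℤ) 1 0 = r*a2 + s*(11*c₁) := by
    intro X p q r s hXc
    rw [coe_mul_explicit X (Tk k * M) p q r s a2 (b + k*d) (11*c₁) d hXc hM1]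
    simp
  have hstuck : ∀ v : ℤ, a2 = v → c₁ = 1 →
      ((Tk k * M : SL(2, ℤ)) : Matrix (Fin 2) (Fin 2) ℤ) = !![v, b + k*d; 11, d] := by
    intro v hv h1
    rw [hM1, hv, h1]
    norm_num
  rcases eq_or_ne a2 0 with h0 | h0
  · exfalso
    have hdvd : (11*c₁) ∣ 1 := ⟨-(b + k*d), by linear_combination -hdet1 + d * h0⟩
    have := Int.le_of_dvd one_pos hdvd
    omega
  by_cases hU : -(2*c₁) < a2 ∧ a2 < 2*c₁
  · obtain ⟨j, r, hj, hrb⟩ := bal c₁ a2 h0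
    apply doit (Uk j) (Uk_mem j) r ?_ ?_
    · rw [hent (Uk j) 1 0 (11*j) 1 rfl]; linear_combination 11 * hj
    · omega
  rcases lt_or_gt_of_ne h0 with hneg | hposa
  · -- a2 < 0, and a2 ≤ -2c₁
    have h2c : a2 ≤ -(2*c₁) := by omega
    rcases lt_trichotomy a2 (-(3*c₁)) with h3lt | h3eq | h3gt
    · -- a2 < -3c₁ : further cases
      rcases lt_trichotomy (3*a2) (-(11*c₁)) with h4lt | h4eq | h4gt
      · -- 3a2 < -11c₁: cases on a2 vs -4c₁
        rcases lt_trichotomy a2 (-(4*c₁)) with h5lt | h5eq | h5gt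
        · -- a2 < -4c₁ (and 2|a2| ≤ 11c₁) : use Az
          apply doit Az Az_mem (a2 + 5*c₁) ?_ ?_
          · rw [hent Az (-2) (-1) 11 5 rfl]; ring
          · omega
        · -- a2 = -4c₁ : stuck
          have hc1 : c₁ = 1 := by
            have hdvd : c₁ ∣ 1 := ⟨-(4*d) - 11*(b + k*d), by linear_combination -hdet1 + d * h5eq⟩
            have := Int.le_of_dvd one_pos hdvd
            omega
          have hv : a2 = -4 := by omega
          exact transfer (Tk_mem k) (Or.inr (stuck4n _ _ _ (hstuck (-4) hv hc1)))
        · -- -4c₁ < a2, 3a2 < -11c₁ : use G5z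
          apply doit G5z G5z_mem (6*a2 + 23*c₁) ?_ ?_
          · rw [hent G5z 23 8 66 23 rfl]; ring
          · omega
      · exfalso
        obtain ⟨t, ht⟩ : (11:ℤ) ∣ a2 := by omega
        have hdvd : (11:ℤ) ∣ 1 := ⟨t*d - (b + k*d)*c₁, by linear_combination -hdet1 + d * ht⟩
        norm_num at hdvd
      · -- -11c₁ < 3a2, a2 < -3c₁ : use G4z
        apply doit G4z G4z_mem (3*a2 + 10*c₁) ?_ ?_
        · rw [hent G4z 10 3 33 10 rfl]; ring
        · omega
    · -- a2 = -3c₁ : stuck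
      have hc1 : c₁ = 1 := by
        have hdvd : c₁ ∣ 1 := ⟨-(3*d) - 11*(b + k*d), by linear_combination -hdet1 + d * h3eq⟩
        have := Int.le_of_dvd one_pos hdvd
        omega
      have hv : a2 = -3 := by omega
      exact transfer (Tk_mem k) (Or.inr (stuck3n _ _ _ (hstuck (-3) hv hc1)))
    · -- -3c₁ < a2 ≤ -2c₁ : use Az⁻¹
      apply doit Az⁻¹ (inv_mem Az_mem) (-(a2 + 2*c₁)) ?_ ?_
      · rw [hent Az⁻¹ 5 1 (-11) (-2) coe_Az_inv]; ring
      · omega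
  · -- a2 > 0, and 2c₁ ≤ a2
    have h2c : 2*c₁ ≤ a2 := by omega
    rcases lt_trichotomy a2 (3*c₁) with h3lt | h3eq | h3gt
    · -- 2c₁ ≤ a2 < 3c₁ : use Vz⁻¹
      apply doit Vz⁻¹ (inv_mem Vz_mem) (-(a2 - 2*c₁)) ?_ ?_
      · rw [hent Vz⁻¹ (-5) 1 (-11) 2 coe_Vz_inv]; ring
      · omega
    · -- a2 = 3c₁ : stuck
      have hc1 : c₁ = 1 := by
        have hdvd : c₁ ∣ 1 := ⟨3*d - 11*(b + k*d), by linear_combination -hdet1 + d * h3eq⟩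
        have := Int.le_of_dvd one_pos hdvd
        omega
      have hv : a2 = 3 := by omega
      exact transfer (Tk_mem k) (Or.inr (stuck3 _ _ _ (hstuck 3 hv hc1)))
    · rcases lt_trichotomy (3*a2) (11*c₁) with h4lt | h4eq | h4gt
      · -- 3c₁ < a2, 3a2 < 11c₁ : use G4z⁻¹
        apply doit G4z⁻¹ (inv_mem G4z_mem) (10*c₁ - 3*a2) ?_ ?_
        · rw [hent G4z⁻¹ 10 (-3) (-33) 10 coe_G4z_inv]; ring
        · omega
      · exfalso
        obtain ⟨t, ht⟩ : (11:ℤ) ∣ a2 := by omega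
        have hdvd : (11:ℤ) ∣ 1 := ⟨t*d - (b + k*d)*c₁, by linear_combination -hdet1 + d * ht⟩
        norm_num at hdvd
      · rcases lt_trichotomy a2 (4*c₁) with h5lt | h5eq | h5gt
        · -- 11c₁ < 3a2, a2 < 4c₁ : use G5z⁻¹
          apply doit G5z⁻¹ (inv_mem G5z_mem) (23*c₁ - 6*a2) ?_ ?_
          · rw [hent G5z⁻¹ 23 (-8) (-66) 23 coe_G5z_inv]; ring
          · omega
        · -- a2 = 4c₁ : stuck
          have hc1 : c₁ = 1 := by
            have hdvd : c₁ ∣ 1 := ⟨4*d - 11*(b + k*d), by linear_combination -hdet1 + d * h5eq⟩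
            have := Int.le_of_dvd one_pos hdvd
            omega
          have hv : a2 = 4 := by omega
          exact transfer (Tk_mem k) (Or.inr (stuck4 _ _ _ (hstuck 4 hv hc1)))
        · -- 4c₁ < a2 (and 2a2 ≤ 11c₁) : use Vz
          apply doit Vz Vz_mem (a2 - 5*c₁) ?_ ?_
          · rw [hent Vz 2 (-1) 11 (-5) rfl]; ring
          · omega

lemma descent_aux : ∀ n : ℕ, ∀ M : SL(2, ℤ), ((M : Matrix (Fin 2) (Fin 2) ℤ) 1 0).natAbs ≤ n →
    (11 ∣ (M : Matrix (Fin 2) (Fin 2) ℤ) 1 0) → M ∈ Hz ∨ M * R0⁻¹ ∈ Hz := by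
  intro n
  induction n with
  | zero =>
    intro M h _
    exact Or.inl (base M (by omega))
  | succ n ih =>
    intro M h hdvd
    obtain ⟨c₁, hc₁⟩ := hdvd
    rcases lt_trichotomy c₁ 0 with hneg | h0 | hpos
    · -- negative: pass to Nz * M
      have hM := Matrix.eta_fin_two (M : Matrix (Fin 2) (Fin 2) ℤ)
      have hNM : ((Nz * M : SL(2, ℤ)) : Matrix (Fin 2) (Fin 2) ℤ) 1 0 = 11 * (-c₁) := by
        rw [coe_mul_explicit Nz M (-1) 0 0 (-1) _ _ _ _ rfl hM]
        simp
        omega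
      have hres := step (Nz * M) (-c₁) (by omega) hNM (fun M' h1 h2 => ih M' (by omega) h2)
      exact transfer Nz_mem hres
    · exact Or.inl (base M (by omega))
    · exact step M c₁ hpos hc₁ (fun M' h1 h2 => ih M' (by omega) h2)

theorem gamma0_descent (M : SL(2, ℤ)) (hdvd : 11 ∣ (M : Matrix (Fin 2) (Fin 2) ℤ) 1 0) :
    M ∈ Hz ∨ M * R0⁻¹ ∈ Hz :=
  descent_aux _ M le_rfl hdvd

lemma mem_Gamma0_of_dvd (x : SL(2, ℤ)) (h : 11 ∣ (x : Matrix (Fin 2) (Fin 2) ℤ) 1 0) :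
    x ∈ CongruenceSubgroup.Gamma0 11 := by
  rw [CongruenceSubgroup.Gamma0_mem]
  exact_mod_cast (ZMod.intCast_zmod_eq_zero_iff_dvd _ 11).mpr h

lemma dvd_of_mem_Gamma0 (x : SL(2, ℤ)) (h : x ∈ CongruenceSubgroup.Gamma0 11) :
    11 ∣ (x : Matrix (Fin 2) (Fin 2) ℤ) 1 0 := by
  rw [CongruenceSubgroup.Gamma0_mem] at h
  exact_mod_cast (ZMod.intCast_zmod_eq_zero_iff_dvd _ 11).mp (by exact_mod_cast h)

lemma Hz_le_Gamma0 : Hz ≤ CongruenceSubgroup.Gamma0 11 := by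
  rw [Hz, Subgroup.closure_le]
  rintro x hx
  simp only [S, Set.mem_insert_iff, Set.mem_singleton_iff] at hx
  rcases hx with rfl | rfl | rfl | rfl | rfl | rfl | rfl | rfl <;>
    apply mem_Gamma0_of_dvd <;> decide

lemma Gamma0_index_ne_zero : (CongruenceSubgroup.Gamma0 11).index ≠ 0 := by
  have hle : CongruenceSubgroup.Gamma 11 ≤ CongruenceSubgroup.Gamma0 11 := by
    intro x hx
    rw [CongruenceSubgroup.Gamma_mem] at hx
    rw [CongruenceSubgroup.Gamma0_mem]
    exact hx.2.2.1
  intro h0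
  have hdvd := Subgroup.index_dvd_of_le hle
  rw [h0] at hdvd
  have hzero := Nat.eq_zero_of_zero_dvd hdvd
  have hker : (CongruenceSubgroup.Gamma 11).index
      = Nat.card ((@Matrix.SpecialLinearGroup.map (Fin 2) _ _ _ _ _ _
        (Int.castRingHom (ZMod 11))).range) := Subgroup.index_ker _
  rw [hker] at hzero
  have : Nat.card ((@Matrix.SpecialLinearGroup.map (Fin 2) _ _ _ _ _ _
      (Int.castRingHom (ZMod 11))).range) ≠ 0 :=
    Nat.card_ne_zero.mpr ⟨One.instNonempty, inferInstance⟩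
  exact this hzero

lemma R0_mem_Gamma0 : R0 ∈ CongruenceSubgroup.Gamma0 11 := by
  apply mem_Gamma0_of_dvd; decide

lemma Hz_relindex_Gamma0 : Hz.relIndex (CongruenceSubgroup.Gamma0 11) ≠ 0 := by
  have hfin : Finite ((CongruenceSubgroup.Gamma0 11) ⧸
      Hz.subgroupOf (CongruenceSubgroup.Gamma0 11)) := by
    apply Finite.of_surjective
      (f := fun b : Bool => if b then (QuotientGroup.mk ⟨R0⁻¹, inv_mem R0_mem_Gamma0⟩ :
        (CongruenceSubgroup.Gamma0 11) ⧸ Hz.subgroupOf (CongruenceSubgroup.Gamma0 11))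
        else QuotientGroup.mk 1)
    intro q
    induction q using QuotientGroup.induction_on with
    | H x =>
      have hdvd : 11 ∣ ((((x : SL(2, ℤ))⁻¹ : SL(2, ℤ))) : Matrix (Fin 2) (Fin 2) ℤ) 1 0 := by
        have h := dvd_of_mem_Gamma0 _ x.2
        have hM := Matrix.eta_fin_two ((x : SL(2, ℤ)) : Matrix (Fin 2) (Fin 2) ℤ)
        rw [coe_inv_explicit (x : SL(2, ℤ)) _ _ _ _ hM]
        simpa using dvd_neg.mpr h
      rcases gamma0_descent _ hdvd with hin | hin
      · refine ⟨false, ?_⟩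
        simp only [if_neg Bool.false_ne_true]
        apply (QuotientGroup.eq).mpr
        rw [Subgroup.mem_subgroupOf]
        simpa using (inv_mem_iff).mp hin
      · refine ⟨true, ?_⟩
        simp only [if_pos rfl]
        apply (QuotientGroup.eq).mpr
        rw [Subgroup.mem_subgroupOf]
        have : (R0 * (x : SL(2, ℤ)))⁻¹ ∈ Hz := by simpa [_root_.mul_inv_rev] using hin
        simpa using (inv_mem_iff).mp this
  exact Subgroup.index_ne_zero_of_finite

lemma Hz_index_ne_zero : Hz.index ≠ 0 := by
  rw [← Subgroup.relIndex_mul_index Hz_le_Gamma0]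
  exact Nat.mul_ne_zero Hz_relindex_Gamma0 Gamma0_index_ne_zero

end ArithRefl

section RealSide
open ArithRefl

noncomputable abbrev sq11 : ℝ := Real.sqrt 11

lemma coe_mul_explicitR (X M : SL(2, ℝ)) (p q r s a b c d : ℝ)
    (hX : (X : Matrix (Fin 2) (Fin 2) ℝ) = !![p, q; r, s])
    (hM : (M : Matrix (Fin 2) (Fin 2) ℝ) = !![a, b; c, d]) :
    ((X * M : SL(2, ℝ)) : Matrix (Fin 2) (Fin 2) ℝ)
      = !![p*a+q*c, p*b+q*d; r*a+s*c, r*b+s*d] := by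
  rw [Matrix.SpecialLinearGroup.coe_mul, hX, hM, Matrix.mul_fin_two]

lemma coe_inv_explicitR (X : SL(2, ℝ)) (p q r s : ℝ)
    (hX : (X : Matrix (Fin 2) (Fin 2) ℝ) = !![p, q; r, s]) :
    ((X⁻¹ : SL(2, ℝ)) : Matrix (Fin 2) (Fin 2) ℝ) = !![s, -q; -r, p] := by
  rw [Matrix.SpecialLinearGroup.coe_inv, hX, Matrix.adjugate_fin_two_of]

lemma mapSL_coe_explicit (M : SL(2, ℤ)) (a b c d : ℤ)
    (hM : (M : Matrix (Fin 2) (Fin 2) ℤ) = !![a, b; c, d]) :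
    ((mapSL M : SL(2, ℝ)) : Matrix (Fin 2) (Fin 2) ℝ)
      = !![(a : ℝ), (b : ℝ); (c : ℝ), (d : ℝ)] := by
  show (M : Matrix (Fin 2) (Fin 2) ℤ).map (Int.castRingHom ℝ) = _
  rw [hM]
  ext i j
  fin_cases i <;> fin_cases j <;> simp

lemma hs11 : sq11 * sq11 = 11 := Real.mul_self_sqrt (by norm_num)
lemma hs0 : sq11 ≠ 0 := by unfold sq11; positivity

lemma coe_gamma2_inv :
    ((gamma2⁻¹ : SL(2, ℝ)) : Matrix (Fin 2) (Fin 2) ℝ) = !![0, 1/sq11; -sq11, 0] := by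
  rw [coe_inv_explicitR gamma2 0 (-1/sq11) sq11 0 rfl]
  ext i j
  fin_cases i <;> fin_cases j <;> (norm_num; try ring_nf)

lemma eT : mapSL (Tk 1) = gamma1 := by
  apply Subtype.ext
  rw [mapSL_coe_explicit (Tk 1) 1 1 0 1 rfl]
  norm_num
  rfl

lemma eG4 : mapSL G4z = gamma4 := by
  apply Subtype.ext
  rw [mapSL_coe_explicit G4z 10 3 33 10 rfl]
  norm_num
  rfl

lemma eG5 : mapSL G5z = gamma5 := by
  apply Subtype.ext
  rw [mapSL_coe_explicit G5z 23 8 66 23 rfl]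
  norm_num
  rfl

lemma eN : gamma2 * gamma2 = mapSL Nz := by
  apply Subtype.ext
  rw [coe_mul_explicitR gamma2 gamma2 0 (-1/sq11) sq11 0 0 (-1/sq11) sq11 0 rfl rfl,
    mapSL_coe_explicit Nz (-1) 0 0 (-1) rfl]
  have h0 := hs0
  ext i j
  fin_cases i <;> fin_cases j <;> field_simp <;> simp

lemma eU : gamma2 * gamma1⁻¹ * gamma2⁻¹ = mapSL (Uk 1) := by
  apply Subtype.ext
  have h1 : ((gamma1⁻¹ : SL(2,ℝ)) : Matrix (Fin 2) (Fin 2) ℝ) = !![1, -1; 0, 1] := by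
    rw [coe_inv_explicitR gamma1 1 1 0 1 rfl]; norm_num
  have h2 : ((gamma2 * gamma1⁻¹ : SL(2,ℝ)) : Matrix (Fin 2) (Fin 2) ℝ)
      = !![0, -1/sq11; sq11, -sq11] := by
    rw [coe_mul_explicitR gamma2 gamma1⁻¹ 0 (-1/sq11) sq11 0 1 (-1) 0 1 rfl h1]
    norm_num
  rw [coe_mul_explicitR (gamma2 * gamma1⁻¹) gamma2⁻¹ 0 (-1/sq11) sq11 (-sq11) 0 (1/sq11)
    (-sq11) 0 h2 coe_gamma2_inv, mapSL_coe_explicit (Uk 1) 1 0 11 1 rfl]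
  have h0 := hs0
  have h11 := hs11
  ext i j
  fin_cases i <;> fin_cases j <;> (simp only [Matrix.cons_val', Matrix.cons_val_zero, Matrix.cons_val_one, Matrix.head_cons, Matrix.head_fin_const, Matrix.empty_val', Matrix.cons_val_fin_one, Matrix.of_apply]; push_cast; field_simp) <;> first | ring1 | (rw [pow_two, hs11]; ring1) | (rw [hs11]; ring1) | (ring_nf; rw [pow_two, hs11]; ring1) | (ring_nf; rw [pow_two, hs11]) | nlinarith [hs11]

lemma eV : gamma2 * gamma3⁻¹ = mapSL Vz := by
  apply Subtype.ext
  have h1 : ((gamma3⁻¹ : SL(2,ℝ)) : Matrix (Fin 2) (Fin 2) ℝ)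
      = !![sq11, -(5/sq11); -(2*sq11), sq11] := by
    rw [coe_inv_explicitR gamma3 sq11 (5/sq11) (2*sq11) sq11 rfl]
  rw [coe_mul_explicitR gamma2 gamma3⁻¹ 0 (-1/sq11) sq11 0 sq11 (-(5/sq11)) (-(2*sq11)) sq11
    rfl h1, mapSL_coe_explicit Vz 2 (-1) 11 (-5) rfl]
  have h0 := hs0
  have h11 := hs11
  ext i j
  fin_cases i <;> fin_cases j <;> (simp only [Matrix.cons_val', Matrix.cons_val_zero, Matrix.cons_val_one, Matrix.head_cons, Matrix.head_fin_const, Matrix.empty_val', Matrix.cons_val_fin_one, Matrix.of_apply]; push_cast; field_simp) <;> first | ring1 | (rw [pow_two, hs11]; ring1) | (rw [hs11]; ring1) | (ring_nf; rw [pow_two, hs11]; ring1) | (ring_nf; rw [pow_two, hs11]) | nlinarith [hs11]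

lemma eA : gamma2 * gamma3 = mapSL Az := by
  apply Subtype.ext
  rw [coe_mul_explicitR gamma2 gamma3 0 (-1/sq11) sq11 0 sq11 (5/sq11) (2*sq11) sq11
    rfl rfl, mapSL_coe_explicit Az (-2) (-1) 11 5 rfl]
  have h0 := hs0
  have h11 := hs11
  ext i j
  fin_cases i <;> fin_cases j <;> (simp only [Matrix.cons_val', Matrix.cons_val_zero, Matrix.cons_val_one, Matrix.head_cons, Matrix.head_fin_const, Matrix.empty_val', Matrix.cons_val_fin_one, Matrix.of_apply]; push_cast; field_simp) <;> first | ring1 | (rw [pow_two, hs11]; ring1) | (rw [hs11]; ring1) | (ring_nf; rw [pow_two, hs11]; ring1) | (ring_nf; rw [pow_two, hs11]) | nlinarith [hs11]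

lemma eW : gamma2 * gamma5 * gamma2⁻¹ = mapSL Wz := by
  apply Subtype.ext
  have h2 : ((gamma2 * gamma5 : SL(2,ℝ)) : Matrix (Fin 2) (Fin 2) ℝ)
      = !![(-66)/sq11, (-23)/sq11; 23*sq11, 8*sq11] := by
    rw [coe_mul_explicitR gamma2 gamma5 0 (-1/sq11) sq11 0 23 8 66 23 rfl rfl]
    have h0 := hs0
    ext i j
    fin_cases i <;> fin_cases j <;> (simp only [Matrix.cons_val', Matrix.cons_val_zero, Matrix.cons_val_one, Matrix.head_cons, Matrix.head_fin_const, Matrix.empty_val', Matrix.cons_val_fin_one, Matrix.of_apply]; push_cast; field_simp) <;> first | ring1 | (rw [pow_two, hs11]; ring1) | (rw [hs11]; ring1) | (ring_nf; rw [pow_two, hs11]; ring1) | (ring_nf; rw [pow_two, hs11]) | nlinarith [hs11]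
  rw [coe_mul_explicitR (gamma2 * gamma5) gamma2⁻¹ ((-66)/sq11) ((-23)/sq11) (23*sq11)
    (8*sq11) 0 (1/sq11) (-sq11) 0 h2 coe_gamma2_inv, mapSL_coe_explicit Wz 23 (-6) (-88) 23 rfl]
  have h0 := hs0
  have h11 := hs11
  ext i j
  fin_cases i <;> fin_cases j <;> (simp only [Matrix.cons_val', Matrix.cons_val_zero, Matrix.cons_val_one, Matrix.head_cons, Matrix.head_fin_const, Matrix.empty_val', Matrix.cons_val_fin_one, Matrix.of_apply]; push_cast; field_simp) <;> first | ring1 | (rw [pow_two, hs11]; ring1) | (rw [hs11]; ring1) | (ring_nf; rw [pow_two, hs11]; ring1) | (ring_nf; rw [pow_two, hs11]) | nlinarith [hs11]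

def NAz : SL(2, ℤ) := ⟨!![2, 1; -11, -5], by norm_num [Matrix.det_fin_two_of]⟩

lemma eG3 : gamma3 = gamma2 * mapSL NAz := by
  apply Subtype.ext
  have h1 : ((mapSL NAz : SL(2,ℝ)) : Matrix (Fin 2) (Fin 2) ℝ) = !![2, 1; -11, -5] := by
    rw [mapSL_coe_explicit NAz 2 1 (-11) (-5) rfl]; norm_num
  rw [coe_mul_explicitR gamma2 (mapSL NAz) 0 (-1/sq11) sq11 0 2 1 (-11) (-5) rfl h1]
  have h0 := hs0
  have h11 := hs11
  show (!![sq11, 5/sq11; 2*sq11, sq11] : Matrix (Fin 2) (Fin 2) ℝ) = _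
  ext i j
  fin_cases i <;> fin_cases j <;> (simp only [Matrix.cons_val', Matrix.cons_val_zero, Matrix.cons_val_one, Matrix.head_cons, Matrix.head_fin_const, Matrix.empty_val', Matrix.cons_val_fin_one, Matrix.of_apply]; push_cast; field_simp) <;> first | ring1 | (rw [pow_two, hs11]; ring1) | (rw [hs11]; ring1) | (ring_nf; rw [pow_two, hs11]; ring1) | (ring_nf; rw [pow_two, hs11]) | nlinarith [hs11]

lemma conj_gamma2 (M : SL(2, ℤ)) (h : 11 ∣ (M : Matrix (Fin 2) (Fin 2) ℤ) 1 0) :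
    ∃ M' : SL(2, ℤ), (11 ∣ (M' : Matrix (Fin 2) (Fin 2) ℤ) 1 0) ∧
      gamma2 * mapSL M * gamma2⁻¹ = mapSL M' := by
  obtain ⟨m, hm⟩ := h
  have hM := Matrix.eta_fin_two (M : Matrix (Fin 2) (Fin 2) ℤ)
  rw [hm] at hM
  obtain ⟨a, b, d, hM⟩ : ∃ a b d, (M : Matrix (Fin 2) (Fin 2) ℤ) = !![a, b; 11*m, d] :=
    ⟨_, _, _, hM⟩
  have hdet := det_explicit M a b (11*m) d hM
  refine ⟨⟨!![d, -m; -11*b, a], by rw [Matrix.det_fin_two_of]; linear_combination hdet⟩,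
    ⟨-b, by simp⟩, ?_⟩
  apply Subtype.ext
  have h1 : ((mapSL M : SL(2,ℝ)) : Matrix (Fin 2) (Fin 2) ℝ)
      = !![(a:ℝ), (b:ℝ); ((11*m : ℤ) : ℝ), (d:ℝ)] := mapSL_coe_explicit M a b (11*m) d hM
  have h2 : ((gamma2 * mapSL M : SL(2,ℝ)) : Matrix (Fin 2) (Fin 2) ℝ)
      = !![-(11*(m:ℝ))/sq11, -(d:ℝ)/sq11; sq11*(a:ℝ), sq11*(b:ℝ)] := by
    rw [coe_mul_explicitR gamma2 (mapSL M) 0 (-1/sq11) sq11 0 (a:ℝ) (b:ℝ)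
      ((11*m : ℤ) : ℝ) (d:ℝ) rfl h1]
    have h0 := hs0
    push_cast
    ext i j
    fin_cases i <;> fin_cases j <;> (simp only [Matrix.cons_val', Matrix.cons_val_zero, Matrix.cons_val_one, Matrix.head_cons, Matrix.head_fin_const, Matrix.empty_val', Matrix.cons_val_fin_one, Matrix.of_apply]; push_cast; field_simp) <;> first | ring1 | (rw [pow_two, hs11]; ring1) | (rw [hs11]; ring1) | (ring_nf; rw [pow_two, hs11]; ring1) | (ring_nf; rw [pow_two, hs11]) | nlinarith [hs11]
  rw [coe_mul_explicitR (gamma2 * mapSL M) gamma2⁻¹ (-(11*(m:ℝ))/sq11) (-(d:ℝ)/sq11)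
    (sq11*(a:ℝ)) (sq11*(b:ℝ)) 0 (1/sq11) (-sq11) 0 h2 coe_gamma2_inv]
  erw [mapSL_coe_explicit _ d (-m) (-11*b) a rfl]
  have h0 := hs0
  have h11 := hs11
  push_cast
  ext i j
  fin_cases i <;> fin_cases j <;> (simp only [Matrix.cons_val', Matrix.cons_val_zero, Matrix.cons_val_one, Matrix.head_cons, Matrix.head_fin_const, Matrix.empty_val', Matrix.cons_val_fin_one, Matrix.of_apply]; push_cast; field_simp) <;> first | ring1 | (rw [pow_two, hs11]; ring1) | (rw [hs11]; ring1) | (ring_nf; rw [pow_two, hs11]; ring1) | (ring_nf; rw [pow_two, hs11]) | nlinarith [hs11]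

end RealSide

section Final
open ArithRefl

def GammaR : Subgroup SL(2, ℝ) := Subgroup.closure {gamma1, gamma2, gamma3, gamma4, gamma5}

lemma g1_mem : gamma1 ∈ GammaR := Subgroup.subset_closure (by simp)
lemma g2_mem : gamma2 ∈ GammaR := Subgroup.subset_closure (by simp)
lemma g3_mem : gamma3 ∈ GammaR := Subgroup.subset_closure (by simp)
lemma g4_mem : gamma4 ∈ GammaR := Subgroup.subset_closure (by simp)
lemma g5_mem : gamma5 ∈ GammaR := Subgroup.subset_closure (by simp)

lemma mapHz_le : Subgroup.map mapSL Hz ≤ GammaR := by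
  rw [Subgroup.map_le_iff_le_comap, Hz, Subgroup.closure_le]
  rintro x hx
  simp only [S, Set.mem_insert_iff, Set.mem_singleton_iff] at hx
  rw [SetLike.mem_coe, Subgroup.mem_comap]
  rcases hx with rfl | rfl | rfl | rfl | rfl | rfl | rfl | rfl
  · rw [eT]; exact g1_mem
  · rw [← eU]; exact mul_mem (mul_mem g2_mem (inv_mem g1_mem)) (inv_mem g2_mem)
  · rw [← eV]; exact mul_mem g2_mem (inv_mem g3_mem)
  · rw [← eA]; exact mul_mem g2_mem g3_mem
  · rw [eG4]; exact g4_mem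
  · rw [eG5]; exact g5_mem
  · rw [← eW]; exact mul_mem (mul_mem g2_mem g5_mem) (inv_mem g2_mem)
  · rw [← eN]; exact mul_mem g2_mem g2_mem

lemma mapSL_inj : Function.Injective mapSL := by
  intro M N h
  apply Subtype.ext
  ext i j
  have h1 := congrArg (fun X : SL(2, ℝ) => (X : Matrix (Fin 2) (Fin 2) ℝ) i j) h
  have h2 : (((M : Matrix (Fin 2) (Fin 2) ℤ) i j : ℤ) : ℝ)
      = (((N : Matrix (Fin 2) (Fin 2) ℤ) i j : ℤ) : ℝ) := h1
  exact_mod_cast h2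

lemma dir1 : GammaR.relIndex mapSL.range ≠ 0 := by
  have h2 : (Subgroup.map mapSL Hz).relIndex mapSL.range = Hz.index := by
    have h := Subgroup.relIndex_comap (Subgroup.map mapSL Hz) mapSL ⊤
    rw [Subgroup.comap_map_eq_self_of_injective mapSL_inj, Subgroup.relIndex_top_right] at h
    rw [MonoidHom.range_eq_map]
    exact h.symm
  intro h0
  have hdvd := Subgroup.relIndex_dvd_of_le_left mapSL.range mapHz_le
  rw [h0] at hdvd
  rw [Nat.eq_zero_of_zero_dvd hdvd] at h2
  exact Hz_index_ne_zero h2.symm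

def Lam11 : Subgroup SL(2, ℝ) := Subgroup.map mapSL (CongruenceSubgroup.Gamma0 11)

lemma Lam11_le_range : Lam11 ≤ mapSL.range := by
  rintro x ⟨M, _, rfl⟩
  exact ⟨M, rfl⟩

lemma conjL {g : SL(2, ℝ)} (hg : g ∈ Lam11) : gamma2 * g * gamma2⁻¹ ∈ Lam11 := by
  obtain ⟨M, hM, rfl⟩ := hg
  obtain ⟨M', hM', heq⟩ := conj_gamma2 M (dvd_of_mem_Gamma0 M hM)
  rw [heq]
  exact ⟨M', mem_Gamma0_of_dvd M' hM', rfl⟩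

lemma Nz_mem_Gamma0 : Nz ∈ CongruenceSubgroup.Gamma0 11 := by
  apply mem_Gamma0_of_dvd; decide

lemma g2sq_mem : gamma2 * gamma2 ∈ Lam11 := by
  rw [eN]; exact ⟨Nz, Nz_mem_Gamma0, rfl⟩

lemma conjL' {g : SL(2, ℝ)} (hg : g ∈ Lam11) : gamma2⁻¹ * g * gamma2 ∈ Lam11 := by
  have h := mul_mem (mul_mem (inv_mem g2sq_mem) (conjL hg)) g2sq_mem
  rwa [show (gamma2*gamma2)⁻¹ * (gamma2 * g * gamma2⁻¹) * (gamma2*gamma2)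
    = gamma2⁻¹ * g * gamma2 by group] at h

lemma key : ∀ g ∈ GammaR, g ∈ Lam11 ∨ ∃ l ∈ Lam11, g = gamma2 * l := by
  intro g hg
  induction hg using Subgroup.closure_induction with
  | mem x hx =>
    simp only [Set.mem_insert_iff, Set.mem_singleton_iff] at hx
    rcases hx with rfl | rfl | rfl | rfl | rfl
    · exact Or.inl ⟨Tk 1, mem_Gamma0_of_dvd _ (by decide), eT⟩
    · exact Or.inr ⟨1, one_mem _, (mul_one _).symm⟩
    · exact Or.inr ⟨mapSL NAz, ⟨NAz, mem_Gamma0_of_dvd _ (by decide), rfl⟩, eG3⟩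
    · exact Or.inl ⟨G4z, mem_Gamma0_of_dvd _ (by decide), eG4⟩
    · exact Or.inl ⟨G5z, mem_Gamma0_of_dvd _ (by decide), eG5⟩
  | one => exact Or.inl (one_mem _)
  | mul x y hx hy px py =>
    rcases px with px | ⟨lx, hlx, rfl⟩
    · rcases py with py | ⟨ly, hly, rfl⟩
      · exact Or.inl (mul_mem px py)
      · refine Or.inr ⟨(gamma2⁻¹ * x * gamma2) * ly, mul_mem (conjL' px) hly, by group⟩
    · rcases py with py | ⟨ly, hly, rfl⟩
      · exact Or.inr ⟨lx * y, mul_mem hlx py, by group⟩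
      · refine Or.inl ?_
        have h1 : gamma2 * lx * gamma2⁻¹ ∈ Lam11 := conjL hlx
        have h2 : gamma2 * lx * (gamma2 * ly)
            = (gamma2 * lx * gamma2⁻¹) * (gamma2 * gamma2) * ly := by group
        rw [h2]
        exact mul_mem (mul_mem h1 g2sq_mem) hly
  | inv x hx px =>
    rcases px with px | ⟨lx, hlx, rfl⟩
    · exact Or.inl (inv_mem px)
    · refine Or.inr ⟨(gamma2⁻¹ * lx⁻¹ * gamma2) * (gamma2 * gamma2)⁻¹,
        mul_mem (conjL' (inv_mem hlx)) (inv_mem g2sq_mem), by group⟩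

lemma dir2 : mapSL.range.relIndex GammaR ≠ 0 := by
  have hfin : Finite (GammaR ⧸ (mapSL.range).subgroupOf GammaR) := by
    apply Finite.of_surjective
      (f := fun b : Bool => if b then (QuotientGroup.mk ⟨gamma2, g2_mem⟩ :
        GammaR ⧸ (mapSL.range).subgroupOf GammaR) else QuotientGroup.mk 1)
    intro q
    induction q using QuotientGroup.induction_on with
    | H x =>
      rcases key (x : SL(2, ℝ)) x.2 with hin | ⟨l, hl, hx⟩
      · refine ⟨false, ?_⟩
        simp only [if_neg Bool.false_ne_true]
        apply (QuotientGroup.eq).mpr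
        rw [Subgroup.mem_subgroupOf]
        simpa using Lam11_le_range hin
      · refine ⟨true, ?_⟩
        simp only [if_pos rfl]
        apply (QuotientGroup.eq).mpr
        rw [Subgroup.mem_subgroupOf]
        have : (gamma2⁻¹ * (x : SL(2, ℝ))) ∈ mapSL.range := by
          rw [hx, inv_mul_cancel_left]
          exact Lam11_le_range hl
        simpa using this
  exact Subgroup.index_ne_zero_of_finite

end Final

/-- The subgroup of `SL(2,ℝ)` generated by `γ₁, …, γ₅` is commensurable with the image
of `SL(2,ℤ)` in `SL(2,ℝ)`: their intersection has finite index in each. -/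
theorem generated_subgroup_commensurable_modular :
    Subgroup.Commensurable (Subgroup.closure {gamma1, gamma2, gamma3, gamma4, gamma5})
      mapSL.range := by
  exact ⟨dir1, dir2⟩
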